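/- The function ψ₁(x) = (r+α)·e^{r·x} − (s+α)·e^{s·x} satisfies ψ₁'(x) > 0 for every real x (so ψ₁ is strictly increasing on ℝ), and for every x > 0 it satisfies the integro-differential equation c·ψ₁'(x) − (λ+δ)·ψ₁(x) + λ·∫₀ˣ ψ₁(x−y)·α·e^{−α·y} dy = 0. -/

import Mathlib

lemma exp_int (b x : ℝ) (hb : b ≠ 0) :
    ∫ y in (0:ℝ)..x, Real.exp (b * y) = (Real.exp (b * x) - 1) / b := by
  have h : ∀ y ∈ Set.uIcc (0:ℝ) x,
      HasDerivAt (fun t => Real.exp (b * t) / b) (Real.exp (b * y)) y := by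
    intro y _
    have h1 : HasDerivAt (fun t : ℝ => b * t) b y := by
      simpa using (hasDerivAt_id y).const_mul b
    have h2 := h1.exp.div_const b
    simpa [mul_comm, mul_div_assoc, mul_div_cancel_right₀, hb] using h2
  have hi : IntervalIntegrable (fun y => Real.exp (b * y)) MeasureTheory.volume 0 x := by
    apply Continuous.intervalIntegrable; fun_prop
  rw [intervalIntegral.integral_eq_sub_of_hasDerivAt h hi]
  simp [mul_comm]
  ring

/-- ψ₁(x) = (r+α)·e^{rx} − (s+α)·e^{sx} satisfies ψ₁'(x) > 0 for every real x
(so ψ₁ is strictly increasing on ℝ), and for every x > 0 it satisfies the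
integro-differential equation
c·ψ₁'(x) − (λ+δ)·ψ₁(x) + λ·∫₀ˣ ψ₁(x−y)·α·e^{−αy} dy = 0. -/
theorem stmt_1 (c lam del al r s : ℝ) (hc : 0 < c) (hlam : 0 < lam) (hdel : 0 < del)
    (hal : 0 < al)
    (hr : c * r ^ 2 - (lam + del - al * c) * r - al * del = 0)
    (hs : c * s ^ 2 - (lam + del - al * c) * s - al * del = 0)
    (hs1 : -al < s) (hs2 : s < 0) (hr1 : 0 < r) :
    (∀ x : ℝ,
      HasDerivAt (fun z => (r + al) * Real.exp (r * z) - (s + al) * Real.exp (s * z))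
        (r * (r + al) * Real.exp (r * x) - s * (s + al) * Real.exp (s * x)) x ∧
      0 < r * (r + al) * Real.exp (r * x) - s * (s + al) * Real.exp (s * x)) ∧
    (StrictMono fun z => (r + al) * Real.exp (r * z) - (s + al) * Real.exp (s * z)) ∧
    ∀ x : ℝ, 0 < x →
      c * (r * (r + al) * Real.exp (r * x) - s * (s + al) * Real.exp (s * x))
        - (lam + del) * ((r + al) * Real.exp (r * x) - (s + al) * Real.exp (s * x))
        + lam * ∫ y in (0:ℝ)..x,
            ((r + al) * Real.exp (r * (x - y)) - (s + al) * Real.exp (s * (x - y)))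
              * (al * Real.exp (-al * y)) = 0 := by
  have hra : (0:ℝ) < r + al := by linarith
  have hsa : (0:ℝ) < s + al := by linarith
  have hderiv : ∀ x : ℝ,
      HasDerivAt (fun z => (r + al) * Real.exp (r * z) - (s + al) * Real.exp (s * z))
        (r * (r + al) * Real.exp (r * x) - s * (s + al) * Real.exp (s * x)) x := by
    intro x
    have h1 : HasDerivAt (fun z : ℝ => Real.exp (r * z)) (Real.exp (r * x) * r) x := by
      simpa using (((hasDerivAt_id x).const_mul r).exp : HasDerivAt _ _ x)
    have h2 : HasDerivAt (fun z : ℝ => Real.exp (s * z)) (Real.exp (s * x) * s) x := by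
      simpa using (((hasDerivAt_id x).const_mul s).exp : HasDerivAt _ _ x)
    have := (h1.const_mul (r + al)).sub (h2.const_mul (s + al))
    exact this.congr_deriv (by ring)
  have hpos : ∀ x : ℝ,
      0 < r * (r + al) * Real.exp (r * x) - s * (s + al) * Real.exp (s * x) := by
    intro x
    have e1 : (0:ℝ) < r * (r + al) * Real.exp (r * x) := by positivity
    have e2 : s * (s + al) * Real.exp (s * x) < 0 := by
      have : s * (s + al) < 0 := mul_neg_of_neg_of_pos hs2 hsa
      exact mul_neg_of_neg_of_pos this (Real.exp_pos _)
    linarith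
  refine ⟨fun x => ⟨hderiv x, hpos x⟩, ?_, ?_⟩
  · apply strictMono_of_deriv_pos
    intro x
    rw [(hderiv x).deriv]
    exact hpos x
  · intro x hx
    have hint : (∫ y in (0:ℝ)..x,
        ((r + al) * Real.exp (r * (x - y)) - (s + al) * Real.exp (s * (x - y)))
          * (al * Real.exp (-al * y)))
        = al * Real.exp (r * x) - al * Real.exp (s * x) := by
      have hfun : ∀ y : ℝ,
          ((r + al) * Real.exp (r * (x - y)) - (s + al) * Real.exp (s * (x - y)))
            * (al * Real.exp (-al * y))
          = (al * (r + al) * Real.exp (r * x)) * Real.exp (-(r + al) * y)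
            - (al * (s + al) * Real.exp (s * x)) * Real.exp (-(s + al) * y) := by
        intro y
        have e1 : Real.exp (r * (x - y)) * Real.exp (-al * y)
            = Real.exp (r * x) * Real.exp (-(r + al) * y) := by
          rw [← Real.exp_add, ← Real.exp_add]; ring_nf
        have e2 : Real.exp (s * (x - y)) * Real.exp (-al * y)
            = Real.exp (s * x) * Real.exp (-(s + al) * y) := by
          rw [← Real.exp_add, ← Real.exp_add]; ring_nf
        calc ((r + al) * Real.exp (r * (x - y)) - (s + al) * Real.exp (s * (x - y)))
              * (al * Real.exp (-al * y))
            = al * (r + al) * (Real.exp (r * (x - y)) * Real.exp (-al * y))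
              - al * (s + al) * (Real.exp (s * (x - y)) * Real.exp (-al * y)) := by ring
          _ = _ := by rw [e1, e2]; ring
      rw [intervalIntegral.integral_congr (fun y _ => hfun y)]
      have i1 : IntervalIntegrable
          (fun y => (al * (r + al) * Real.exp (r * x)) * Real.exp (-(r + al) * y))
          MeasureTheory.volume 0 x := by
        apply Continuous.intervalIntegrable; fun_prop
      have i2 : IntervalIntegrable
          (fun y => (al * (s + al) * Real.exp (s * x)) * Real.exp (-(s + al) * y))
          MeasureTheory.volume 0 x := by
        apply Continuous.intervalIntegrable; fun_prop
      rw [intervalIntegral.integral_sub i1 i2, intervalIntegral.integral_const_mul,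
        intervalIntegral.integral_const_mul, exp_int _ _ (neg_ne_zero.mpr (ne_of_gt hra)),
        exp_int _ _ (neg_ne_zero.mpr (ne_of_gt hsa))]
      have e3 : Real.exp (r * x) * Real.exp (-(r + al) * x)
          = Real.exp (s * x) * Real.exp (-(s + al) * x) := by
        rw [← Real.exp_add, ← Real.exp_add]; ring_nf
      have hA : (r + al) ≠ 0 := ne_of_gt hra
      have hB : (s + al) ≠ 0 := ne_of_gt hsa
      set E1 := Real.exp (-(r + al) * x) with hE1
      set E2 := Real.exp (-(s + al) * x) with hE2
      set F1 := Real.exp (r * x) with hF1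
      set F2 := Real.exp (s * x) with hF2
      have c1 : al * (r + al) * F1 * ((E1 - 1) / -(r + al)) = -(al * F1 * (E1 - 1)) := by
        field_simp
      have c2 : al * (s + al) * F2 * ((E2 - 1) / -(s + al)) = -(al * F2 * (E2 - 1)) := by
        field_simp
      rw [c1, c2]
      linear_combination (-al) * e3
    rw [hint]
    linear_combination Real.exp (r * x) * hr - Real.exp (s * x) * hs
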